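/- Let a, b, c, d, e ∈ ℂ and let u : ℤ → ℂ be a sequence with u_n ≠ 0 and c + d u_n + e (u_n)^2 ≠ 0 for all n ∈ ℤ, satisfying the recurrence u_{n+1} u_{n-1} = (a + b u_n + c (u_n)^2)/(c + d u_n + e (u_n)^2) for all n ∈ ℤ. Then the quantity K_n = e u_{n-1} u_n + d (u_{n-1} + u_n) + c (u_{n-1}/u_n + u_n/u_{n-1}) + b (1/u_{n-1} + 1/u_n) + a/(u_{n-1} u_n) is a conserved quantity, i.e. K_n is independent of n. -/

import Mathlib

/-- The mapping `u_{n+1} u_{n-1} = (a + b u_n + c u_n^2)/(c + d u_n + e u_n^2)`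
associated with a symmetric biquadratic curve has the conserved quantity
`K_n = e u_{n-1} u_n + d(u_{n-1}+u_n) + c(u_{n-1}/u_n + u_n/u_{n-1})
  + b(1/u_{n-1} + 1/u_n) + a/(u_{n-1} u_n)`. -/
theorem biquadratic_map_conserved_K (a b c d e : ℂ) (u : ℤ → ℂ)
    (hne : ∀ n : ℤ, u n ≠ 0)
    (hden : ∀ n : ℤ, c + d * u n + e * (u n) ^ 2 ≠ 0)
    (hu : ∀ n : ℤ, u (n + 1) * u (n - 1)
      = (a + b * u n + c * (u n) ^ 2) / (c + d * u n + e * (u n) ^ 2))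
    (K : ℤ → ℂ)
    (hK : ∀ n : ℤ, K n = e * (u (n - 1) * u n) + d * (u (n - 1) + u n)
      + c * (u (n - 1) / u n + u n / u (n - 1))
      + b * (1 / u (n - 1) + 1 / u n) + a / (u (n - 1) * u n)) :
    ∀ m n : ℤ, K m = K n := by
  have step : ∀ n : ℤ, K (n + 1) = K n := by
    intro n
    have hx := hne (n - 1)
    have hy := hne n
    have hz := hne (n + 1)
    have hQ : u (n + 1) * u (n - 1) * (c + d * u n + e * (u n) ^ 2)
        = a + b * u n + c * (u n) ^ 2 := by
      rw [hu n, div_mul_cancel₀ _ (hden n)]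
    rw [hK (n + 1), hK n]
    have h1 : n + 1 - 1 = n := by ring
    rw [h1]
    set x := u (n - 1) with hxdef
    set y := u n with hydef
    set z := u (n + 1) with hzdef
    field_simp
    linear_combination (z - x) * hQ
  have base : ∀ m : ℤ, K m = K 0 := by
    intro m
    induction m using Int.induction_on with
    | zero => rfl
    | succ k ih => rw [step k, ih]
    | pred k ih =>
      have := step (-(k : ℤ) - 1)
      rw [show (-(k : ℤ) - 1 + 1) = -(k : ℤ) by ring] at this
      rw [← this, ih]
  intro m n
  rw [base m, base n]
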